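/- Let 0 < α < β and let 0 ≤ γ₁ < γ₂. Then C_{α,β,γ₁}(ε) < C_{α,β,γ₂}(ε) for all ε ∈ (0,1), while C_{α,β,γ₁}(ε) = C_{α,β,γ₂}(ε) for ε = 0 and ε = 1. -/

import Mathlib

open Set

/-- The function `C_{α,β,γ}(ε)` from the paper:
`C_{α,β,γ}(ε) = (ε^{γβ+1}+1)^{1/β} (1+ε)^{1/α} / ((ε^{γα+1}+1)^{1/α} (1+ε)^{1/β})`. -/
noncomputable def Cfun (α β γ ε : ℝ) : ℝ :=
  ((ε ^ (γ * β + 1) + 1) ^ (1 / β) * (1 + ε) ^ (1 / α)) /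
    ((ε ^ (γ * α + 1) + 1) ^ (1 / α) * (1 + ε) ^ (1 / β))

/-- For `0 < α < β` and `0 ≤ γ₁ < γ₂`, the curves `C_{α,β,γ₁}` and `C_{α,β,γ₂}` satisfy
`C_{α,β,γ₁}(ε) < C_{α,β,γ₂}(ε)` on `(0,1)`, with equality at the endpoints `0` and `1`. -/
theorem Cfun_strict_mono_in_gamma_nonneg
    (α β γ₁ γ₂ : ℝ) (hα : 0 < α) (hαβ : α < β) (hγ₁ : 0 ≤ γ₁) (hγ : γ₁ < γ₂) :
    (∀ ε : ℝ, 0 < ε → ε < 1 → Cfun α β γ₁ ε < Cfun α β γ₂ ε) ∧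
      Cfun α β γ₁ 0 = Cfun α β γ₂ 0 ∧ Cfun α β γ₁ 1 = Cfun α β γ₂ 1 := by
  have hβ : 0 < β := hα.trans hαβ
  have hγ₂ : 0 ≤ γ₂ := hγ₁.trans hγ.le
  refine ⟨?_, ?_, ?_⟩
  · intro ε hε0 hε1
    set f : ℝ → ℝ := fun γ =>
      (1/β) * Real.log (ε ^ (γ * β + 1) + 1) - (1/α) * Real.log (ε ^ (γ * α + 1) + 1)
      with hf
    have hderiv : ∀ γ : ℝ, HasDerivAt f
        (Real.log ε * (ε ^ (γ * β + 1) / (ε ^ (γ * β + 1) + 1)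
          - ε ^ (γ * α + 1) / (ε ^ (γ * α + 1) + 1))) γ := by
      intro γ
      have hterm : ∀ t : ℝ, 0 < t →
          HasDerivAt (fun x => (1/t) * Real.log (ε ^ (x * t + 1) + 1))
            (Real.log ε * (ε ^ (γ * t + 1) / (ε ^ (γ * t + 1) + 1))) γ := by
        intro t ht
        have hApos : 0 < ε ^ (γ * t + 1) := Real.rpow_pos_of_pos hε0 _
        have hlin : HasDerivAt (fun x : ℝ => x * t + 1) t γ := by
          simpa using ((hasDerivAt_id γ).mul_const t).add_const 1
        have h2 : HasDerivAt (fun x => ε ^ (x * t + 1))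
            (ε ^ (γ * t + 1) * Real.log ε * t) γ := by
          have := ((Real.hasStrictDerivAt_const_rpow hε0 (γ * t + 1)).hasDerivAt).comp γ hlin
          exact this
        have h3 := ((Real.hasDerivAt_log (by positivity)).comp γ (h2.add_const 1)).const_mul (1/t)
        refine h3.congr_deriv ?_
        field_simp
      have := (hterm β hβ).sub (hterm α hα)
      refine this.congr_deriv ?_
      ring
    have hmono : StrictMonoOn f (Ici 0) := by
      apply strictMonoOn_of_deriv_pos (convex_Ici 0)
        (fun γ _ => (hderiv γ).continuousAt.continuousWithinAt)
      intro γ hγmem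
      rw [interior_Ici] at hγmem
      have hγpos : 0 < γ := hγmem
      rw [(hderiv γ).deriv]
      have hApos : 0 < ε ^ (γ * β + 1) := Real.rpow_pos_of_pos hε0 _
      have hBpos : 0 < ε ^ (γ * α + 1) := Real.rpow_pos_of_pos hε0 _
      have hAB : ε ^ (γ * β + 1) < ε ^ (γ * α + 1) :=
        Real.rpow_lt_rpow_of_exponent_gt hε0 hε1 (by nlinarith)
      have h1 : ε ^ (γ * β + 1) / (ε ^ (γ * β + 1) + 1)
          < ε ^ (γ * α + 1) / (ε ^ (γ * α + 1) + 1) := by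
        rw [div_lt_div_iff₀ (by positivity) (by positivity)]
        nlinarith
      exact mul_pos_of_neg_of_neg (Real.log_neg hε0 hε1) (by linarith)
    have hflt : f γ₁ < f γ₂ := hmono hγ₁ hγ₂ hγ
    have hrepr : ∀ γ : ℝ, Cfun α β γ ε
        = Real.exp (f γ) * ((1 + ε) ^ (1/α) / (1 + ε) ^ (1/β)) := by
      intro γ
      have hApos : 0 < ε ^ (γ * β + 1) + 1 := by positivity
      have hBpos : 0 < ε ^ (γ * α + 1) + 1 := by positivity
      rw [hf]
      simp only
      rw [Real.exp_sub, mul_comm (1/β), mul_comm (1/α),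
        ← Real.rpow_def_of_pos hApos, ← Real.rpow_def_of_pos hBpos,
        div_mul_div_comm, Cfun]
    rw [hrepr γ₁, hrepr γ₂]
    exact mul_lt_mul_of_pos_right (Real.exp_lt_exp.2 hflt) (by positivity)
  · have h1 : γ₁ * β + 1 ≠ 0 := by nlinarith
    have h2 : γ₂ * β + 1 ≠ 0 := by nlinarith
    have h3 : γ₁ * α + 1 ≠ 0 := by nlinarith
    have h4 : γ₂ * α + 1 ≠ 0 := by nlinarith
    simp [Cfun, Real.zero_rpow h1, Real.zero_rpow h2, Real.zero_rpow h3, Real.zero_rpow h4]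
  · simp [Cfun, Real.one_rpow]
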